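/- Let m > 0, let χ: ℝ⁴ → ℂ be a Schwartz function, and let p = (p⁰,p⃗) with p⃗ ∈ ℝ³ and p⁰ = ω_m(p⃗). Then (2π)^{-2} ∫_{ℝ³} χ̂((p⃗·r⃗)/p⁰, r⃗) d³r⃗ = p⁰ ∫_ℝ χ(sp) ds, where the argument of χ̂ is the four-vector with time component (p⃗·r⃗)/p⁰ and space component r⃗, and χ(sp) is χ evaluated at the four-vector s·p. -/

import Mathlib

/-!
Statement 9: for a Schwartz function `χ` on ℝ⁴ and `p = (ω_m(p⃗), p⃗)`,
`(2π)^{-2} ∫ χ̂((p⃗·r⃗)/p⁰, r⃗) d³r⃗ = p⁰ ∫ χ(sp) ds`,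
where `χ̂(k) = (2π)^{-1} ∫ e^{ik·x} χ(x) dx` (Minkowski product in the exponent).
-/

open Real Complex MeasureTheory
open scoped InnerProductSpace

noncomputable section

abbrev V3 := EuclideanSpace ℝ (Fin 3)

/-- Minkowski-signature Fourier transform `χ̂(k) = (2π)^{-1} ∫ e^{i(k⁰x⁰ − k⃗·x⃗)} χ(x) dx`,
four-vectors represented as pairs `(x⁰, x⃗) : ℝ × V3`. -/
def minkFT (χ : ℝ × V3 → ℂ) (k : ℝ × V3) : ℂ :=
  (2 * (π : ℂ))⁻¹ *
    ∫ x : ℝ × V3, Complex.exp (Complex.I * ((k.1 * x.1 - ⟪k.2, x.2⟫_ℝ : ℝ) : ℂ)) * χ x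


open scoped FourierTransform

namespace MomentumAux

abbrev E4 := EuclideanSpace ℝ (Fin 4)

/-- coordinate splitting of `ℝ⁴` -/
def splitCLE : (Fin 4 → ℝ) ≃L[ℝ] ℝ × (Fin 3 → ℝ) where
  toFun f := (f 0, fun i => f i.succ)
  invFun w := Fin.cons w.1 w.2
  map_add' f g := rfl
  map_smul' c f := rfl
  left_inv f := Fin.cons_self_tail f
  right_inv w := by
    refine Prod.ext (by simp) (funext fun i => by simp)
  continuous_toFun := by
    exact (continuous_apply 0).prodMk (continuous_pi fun i => continuous_apply i.succ)
  continuous_invFun := by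
    refine continuous_pi fun i => ?_
    refine Fin.cases ?_ (fun j => ?_) i
    · simpa using (continuous_fst : Continuous fun w : ℝ × (Fin 3 → ℝ) => w.1)
    · simp only [Fin.cons_succ]
      fun_prop

def TT : E4 ≃L[ℝ] ℝ × V3 :=
  (PiLp.continuousLinearEquiv 2 ℝ _).trans (splitCLE.trans
    ((ContinuousLinearEquiv.refl ℝ ℝ).prodCongr (PiLp.continuousLinearEquiv 2 ℝ
      (fun _ : Fin 3 => ℝ)).symm))

lemma TT_fst (z : E4) : (TT z).1 = z 0 := rfl
lemma TT_snd (z : E4) (i : Fin 3) : (TT z).2 i = z i.succ := rfl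

lemma TT_measurePreserving : MeasurePreserving (⇑TT) volume volume := by
  have m1 := EuclideanSpace.volume_preserving_symm_measurableEquiv_toLp (Fin 4)
  have m2 := MeasureTheory.volume_preserving_piFinSuccAbove (fun _ : Fin 4 => ℝ) 0
  have m3 := (MeasurePreserving.id (volume : Measure ℝ)).prod
    (EuclideanSpace.volume_preserving_symm_measurableEquiv_toLp (Fin 3)).symm
  exact (m3.comp m2).comp m1

/-- embedding of `V3` in the last three coordinates -/
def jmap (u : V3) : E4 := TT.symm (0, u)

lemma jmap_c0 (u : V3) : jmap u 0 = 0 := rfl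
lemma jmap_c1 (u : V3) : jmap u 1 = u 0 := rfl
lemma jmap_c2 (u : V3) : jmap u 2 = u 1 := rfl
lemma jmap_c3 (u : V3) : jmap u 3 = u 2 := rfl

lemma jmap_continuous : Continuous jmap :=
  TT.symm.continuous.comp (continuous_const.prodMk continuous_id)

lemma jmap_inner (u : V3) (z : E4) :
    ⟪z, jmap u⟫_ℝ = ⟪(TT z).2, u⟫_ℝ := by
  simp only [PiLp.inner_apply, RCLike.inner_apply, conj_trivial, Fin.sum_univ_four,
    Fin.sum_univ_three, jmap_c0, jmap_c1, jmap_c2, jmap_c3]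
  have h0 : (TT z).2 0 = z 1 := rfl
  have h1 : (TT z).2 1 = z 2 := rfl
  have h2 : (TT z).2 2 = z 3 := rfl
  rw [h0, h1, h2]
  ring

lemma jmap_norm (u : V3) : ‖jmap u‖ = ‖u‖ := by
  rw [EuclideanSpace.norm_eq, EuclideanSpace.norm_eq]
  congr 1
  simp only [Fin.sum_univ_four, Fin.sum_univ_three, jmap_c0, jmap_c1, jmap_c2, jmap_c3]
  simp

/-- the shear map `(t, y) ↦ (t, y + t • v)` -/
def lowerCLE (v : V3) : (ℝ × V3) ≃L[ℝ] (ℝ × V3) :=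
  (ContinuousLinearEquiv.refl ℝ ℝ).skewProd (ContinuousLinearEquiv.refl ℝ V3)
    ((ContinuousLinearMap.id ℝ ℝ).smulRight v)

lemma lowerCLE_apply (v : V3) (x : ℝ × V3) : lowerCLE v x = (x.1, x.2 + x.1 • v) := rfl

end MomentumAux

open MomentumAux

theorem momentum_space_line_integral (m : ℝ) (hm : 0 < m)
    (χ : SchwartzMap (ℝ × V3) ℂ) (pv : V3) :
    ((2 * (π : ℂ))⁻¹) ^ 2 *
        (∫ r : V3, minkFT (fun x => χ x) (⟪pv, r⟫_ℝ / Real.sqrt (m ^ 2 + ‖pv‖ ^ 2), r)) =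
      ((Real.sqrt (m ^ 2 + ‖pv‖ ^ 2) : ℝ) : ℂ) *
        ∫ s : ℝ, χ (s * Real.sqrt (m ^ 2 + ‖pv‖ ^ 2), s • pv) := by
  have hvol : (volume : Measure (ℝ × V3)) = (volume : Measure ℝ).prod volume :=
    Measure.volume_eq_prod _ _
  haveI hHaar : (volume : Measure (ℝ × V3)).IsAddHaarMeasure := by
    rw [hvol]; infer_instance
  set P : ℝ := Real.sqrt (m ^ 2 + ‖pv‖ ^ 2) with hPdef
  have hP : 0 < P := Real.sqrt_pos.2 (by positivity)
  have hπ : (0:ℝ) < π := Real.pi_pos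
  -- the sheared Schwartz function
  set ψ : SchwartzMap (ℝ × V3) ℂ :=
    SchwartzMap.compCLMOfContinuousLinearEquiv ℝ (lowerCLE (P⁻¹ • pv)) χ with hψdef
  have hψ : ∀ x : ℝ × V3, ψ x = χ (x.1, x.2 + x.1 • (P⁻¹ • pv)) := fun x => rfl
  set η : SchwartzMap E4 ℂ := SchwartzMap.compCLMOfContinuousLinearEquiv ℝ TT ψ with hηdef
  have hη : ∀ z : E4, η z = ψ (TT z) := fun z => rfl
  set h : V3 → ℂ := fun y => ∫ t : ℝ, ψ (t, y) with hhdef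
  set K : V3 → ℂ :=
    fun u => ∫ z : ℝ × V3, Complex.exp (↑(-2 * π * ⟪z.2, u⟫_ℝ) * Complex.I) * ψ z with hKdef
  have expnorm : ∀ t : ℝ, ‖Complex.exp ((t:ℂ) * Complex.I)‖ = 1 := by
    intro t
    rw [Complex.norm_exp]
    simp
  -- integrability of oscillatory integrands
  have hIweight : ∀ (φ : SchwartzMap (ℝ × V3) ℂ) (e : ℝ × V3 → ℝ), Continuous e →
      Integrable (fun x => Complex.exp ((e x : ℂ) * Complex.I) * φ x)
        ((volume : Measure ℝ).prod volume) := by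
    intro φ e he
    rw [← hvol]
    refine (φ.integrable (μ := volume)).bdd_mul (c := 1) ?_ (Filter.Eventually.of_forall fun x => le_of_eq (expnorm _))
    exact (Complex.continuous_exp.comp
      ((Complex.continuous_ofReal.comp he).mul continuous_const)).aestronglyMeasurable
  have hI2 : ∀ u : V3,
      Integrable (fun z : ℝ × V3 => Complex.exp (↑(-2 * π * ⟪z.2, u⟫_ℝ) * Complex.I) * ψ z)
        ((volume : Measure ℝ).prod volume) := by
    intro u
    exact hIweight ψ _ (continuous_const.mul (continuous_snd.inner continuous_const))
  have hI1 : ∀ r : V3,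
      Integrable (fun x : ℝ × V3 =>
          Complex.exp ((((⟪pv, r⟫_ℝ / P) * x.1 - ⟪r, x.2⟫_ℝ : ℝ) : ℂ) * Complex.I) * χ x)
        ((volume : Measure ℝ).prod volume) := by
    intro r
    exact hIweight χ _ ((continuous_const.mul continuous_fst).sub
      (continuous_const.inner continuous_snd))
  -- Step A
  have stepA : ∀ r : V3, minkFT (fun x => χ x) (⟪pv, r⟫_ℝ / P, r)
      = (2 * (π:ℂ))⁻¹ * K ((2 * π)⁻¹ • r) := by
    intro r
    unfold minkFT
    congr 1
    have e1 : ∀ x : ℝ × V3,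
        Complex.exp (Complex.I *
            (((⟪pv, r⟫_ℝ / P, r).1 * x.1 - ⟪(⟪pv, r⟫_ℝ / P, r).2, x.2⟫_ℝ : ℝ) : ℂ)) * χ x
          = Complex.exp ((((⟪pv, r⟫_ℝ / P) * x.1 - ⟪r, x.2⟫_ℝ : ℝ) : ℂ) * Complex.I) * χ x := by
      intro x; rw [mul_comm Complex.I]
    rw [integral_congr_ae (Filter.Eventually.of_forall e1)]
    rw [hvol, integral_prod _ (hI1 r)]
    simp only [hKdef]
    rw [hvol, integral_prod _ (hI2 ((2 * π)⁻¹ • r))]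
    refine integral_congr_ae (Filter.Eventually.of_forall fun t => ?_)
    show (∫ v : V3, Complex.exp ((((⟪pv, r⟫_ℝ / P) * t - ⟪r, v⟫_ℝ : ℝ) : ℂ) * Complex.I) * χ (t, v))
      = ∫ y : V3, Complex.exp (↑(-2 * π * ⟪y, (2 * π)⁻¹ • r⟫_ℝ) * Complex.I) * ψ (t, y)
    have trans := (integral_add_right_eq_self (μ := (volume : Measure V3))
      (fun v : V3 => Complex.exp ((((⟪pv, r⟫_ℝ / P) * t - ⟪r, v⟫_ℝ : ℝ) : ℂ) * Complex.I)
        * χ (t, v))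
      (t • (P⁻¹ • pv))).symm
    rw [trans]
    refine integral_congr_ae (Filter.Eventually.of_forall fun y => ?_)
    show Complex.exp ((((⟪pv, r⟫_ℝ / P) * t - ⟪r, y + t • (P⁻¹ • pv)⟫_ℝ : ℝ) : ℂ) * Complex.I)
        * χ (t, y + t • (P⁻¹ • pv))
      = Complex.exp (↑(-2 * π * ⟪y, (2 * π)⁻¹ • r⟫_ℝ) * Complex.I) * ψ (t, y)
    have hexp : (⟪pv, r⟫_ℝ / P) * t - ⟪r, y + t • (P⁻¹ • pv)⟫_ℝ
        = -2 * π * ⟪y, (2 * π)⁻¹ • r⟫_ℝ := by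
      rw [inner_add_right, real_inner_smul_right, real_inner_smul_right,
        real_inner_smul_right, real_inner_comm r pv, real_inner_comm y r]
      field_simp
      ring
    rw [hexp, hψ (t, y)]
  -- Step B : pull out constants and rescale
  have stepB : (∫ r : V3, minkFT (fun x => χ x) (⟪pv, r⟫_ℝ / P, r))
      = (2 * (π:ℂ))⁻¹ * (((2 * π : ℝ) ^ 3) • ∫ u : V3, K u) := by
    simp only [stepA]
    rw [integral_const_mul]
    congr 1
    rw [Measure.integral_comp_inv_smul (volume : Measure V3) K (2 * π)]
    rw [finrank_euclideanSpace, Fintype.card_fin,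
      abs_of_pos (show (0:ℝ) < (2 * π) ^ 3 by positivity)]
  -- Step C : K = 𝓕 h
  have stepC : ∀ u : V3, K u = 𝓕 h u := by
    intro u
    rw [Real.fourier_eq']
    have e1 : K u = ∫ y : V3, ∫ t : ℝ,
        Complex.exp (↑(-2 * π * ⟪y, u⟫_ℝ) * Complex.I) * ψ (t, y) := by
      simp only [hKdef]
      rw [hvol]
      exact integral_prod_symm _ (hI2 u)
    rw [e1]
    refine integral_congr_ae (Filter.Eventually.of_forall fun y => ?_)
    show (∫ t : ℝ, Complex.exp (↑(-2 * π * ⟪y, u⟫_ℝ) * Complex.I) * ψ (t, y))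
      = Complex.exp (↑(-2 * π * ⟪y, u⟫_ℝ) * Complex.I) • h y
    rw [smul_eq_mul, integral_const_mul]
  -- Step D : K u = 𝓕 η (jmap u)
  have stepD : ∀ u : V3, K u = 𝓕 (⇑η) (jmap u) := by
    intro u
    rw [Real.fourier_eq']
    have key := TT_measurePreserving.integral_comp TT.toHomeomorph.measurableEmbedding
      (fun w : ℝ × V3 => Complex.exp (↑(-2 * π * ⟪w.2, u⟫_ℝ) * Complex.I) * ψ w)
    have e1 : K u = ∫ z : E4,
        Complex.exp (↑(-2 * π * ⟪(TT z).2, u⟫_ℝ) * Complex.I) * ψ (TT z) := by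
      simp only [hKdef]
      exact key.symm
    rw [e1]
    refine integral_congr_ae (Filter.Eventually.of_forall fun z => ?_)
    show Complex.exp (↑(-2 * π * ⟪(TT z).2, u⟫_ℝ) * Complex.I) * ψ (TT z)
      = Complex.exp (↑(-2 * π * ⟪z, jmap u⟫_ℝ) * Complex.I) • η z
    rw [smul_eq_mul, jmap_inner u z, hη z]
  -- integrability of h
  have hψ_prod : Integrable (⇑ψ) ((volume : Measure ℝ).prod volume) := by
    rw [← hvol]; exact ψ.integrable
  have hInt_h : Integrable h := hψ_prod.integral_prod_right
  -- integrability of 𝓕 h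
  set G : SchwartzMap E4 ℂ := SchwartzMap.fourierTransformCLM ℝ η with hGdef
  have hFh_eq : 𝓕 h = fun u => G (jmap u) := by
    funext u
    rw [← stepC u, stepD u]
    rfl
  have hFh_int : Integrable (𝓕 h) := by
    rw [hFh_eq]
    set C : ℝ := 2 ^ 4 * ((Finset.Iic ((4:ℕ),(0:ℕ))).sup
      (schwartzSeminormFamily ℝ E4 ℂ)) G with hCdef
    refine ((integrable_one_add_norm (E := V3) (μ := volume) (r := 4)
        (by rw [finrank_euclideanSpace, Fintype.card_fin]; norm_num)).const_mul C).mono'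
      ((G.continuous.comp jmap_continuous).aestronglyMeasurable)
      (Filter.Eventually.of_forall fun u => ?_)
    have hb := SchwartzMap.one_add_le_sup_seminorm_apply (𝕜 := ℝ) (m := ((4:ℕ),(0:ℕ)))
      (le_refl 4) (le_refl 0) G (jmap u)
    rw [norm_iteratedFDeriv_zero, jmap_norm] at hb
    have hpos : (0:ℝ) < (1 + ‖u‖) ^ (4:ℕ) := by positivity
    have hrpow : ((1:ℝ) + ‖u‖) ^ (-(4:ℝ)) = ((1 + ‖u‖) ^ (4:ℕ))⁻¹ := by
      rw [Real.rpow_neg (show (0:ℝ) ≤ 1 + ‖u‖ by positivity)]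
      congr 1
      rw [show ((4:ℝ)) = ((4:ℕ):ℝ) by norm_num, Real.rpow_natCast]
    show ‖G (jmap u)‖ ≤ C * ((1:ℝ) + ‖u‖) ^ (-(4:ℝ))
    rw [hrpow, ← div_eq_mul_inv, le_div_iff₀ hpos, mul_comm]
    exact hb
  -- continuity of h at 0
  have hcont : ContinuousAt h 0 := by
    set C₂ : ℝ := 2 ^ 2 * ((Finset.Iic ((2:ℕ),(0:ℕ))).sup
      (schwartzSeminormFamily ℝ (ℝ × V3) ℂ)) ψ with hC₂def
    refine continuousAt_of_dominated (F := fun (y : V3) (t : ℝ) => ψ (t, y))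
      (bound := fun t : ℝ => C₂ * ((1:ℝ) + ‖t‖) ^ (-(2:ℝ)))
      (Filter.Eventually.of_forall fun y => ?_)
      (Filter.Eventually.of_forall fun y => Filter.Eventually.of_forall fun t => ?_) ?_ ?_
    · exact (ψ.continuous.comp (continuous_id.prodMk continuous_const)).aestronglyMeasurable
    · show ‖ψ (t, y)‖ ≤ C₂ * ((1:ℝ) + ‖t‖) ^ (-(2:ℝ))
      have hb := SchwartzMap.one_add_le_sup_seminorm_apply (𝕜 := ℝ) (m := ((2:ℕ),(0:ℕ)))
        (le_refl 2) (le_refl 0) ψ (t, y)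
      rw [norm_iteratedFDeriv_zero] at hb
      have h1 : ((1:ℝ) + ‖t‖) ^ (2:ℕ) * ‖ψ (t, y)‖ ≤ C₂ := by
        refine le_trans ?_ hb
        have h2 : ((1:ℝ) + ‖t‖) ^ (2:ℕ) ≤ (1 + ‖(t, y)‖) ^ (2:ℕ) := by
          gcongr
          exact norm_fst_le (t, y)
        exact mul_le_mul_of_nonneg_right h2 (norm_nonneg _)
      have hpos : (0:ℝ) < ((1:ℝ) + ‖t‖) ^ (2:ℕ) := by positivity
      have hrpow : ((1:ℝ) + ‖t‖) ^ (-(2:ℝ)) = (((1:ℝ) + ‖t‖) ^ (2:ℕ))⁻¹ := by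
        rw [Real.rpow_neg (show (0:ℝ) ≤ 1 + ‖t‖ by positivity)]
        congr 1
        rw [show ((2:ℝ)) = ((2:ℕ):ℝ) by norm_num, Real.rpow_natCast]
      rw [hrpow, ← div_eq_mul_inv, le_div_iff₀ hpos, mul_comm]
      exact h1
    · exact (integrable_one_add_norm (E := ℝ) (μ := volume) (r := 2)
        (by simp)).const_mul C₂
    · exact Filter.Eventually.of_forall fun t =>
        (ψ.continuous.comp (continuous_const.prodMk continuous_id)).continuousAt
  -- inversion
  have hK_int_eq : (∫ u : V3, K u) = h 0 := by
    have e1 : (∫ u : V3, K u) = ∫ u : V3, 𝓕 h u :=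
      integral_congr_ae (Filter.Eventually.of_forall fun u => stepC u)
    rw [e1]
    have e2 : 𝓕⁻ (𝓕 h) 0 = h 0 := hInt_h.fourierInv_fourier_eq hFh_int hcont
    rw [← e2, Real.fourierInv_eq']
    refine integral_congr_ae (Filter.Eventually.of_forall fun v => ?_)
    simp
  -- compute h 0
  have h0 : h 0 = (P : ℂ) * ∫ s : ℝ, χ (s * P, s • pv) := by
    have e1 : h 0 = ∫ t : ℝ, χ (t, t • (P⁻¹ • pv)) := by
      simp only [hhdef]
      refine integral_congr_ae (Filter.Eventually.of_forall fun t => ?_)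
      show ψ (t, 0) = χ (t, t • (P⁻¹ • pv))
      rw [hψ (t, 0)]
      simp
    have e2 := MeasureTheory.Measure.integral_comp_mul_left
      (fun t : ℝ => χ (t, t • (P⁻¹ • pv))) P
    have e3 : ∀ s : ℝ, χ (P * s, (P * s) • (P⁻¹ • pv)) = χ (s * P, s • pv) := by
      intro s
      have hs : (P * s) • (P⁻¹ • pv) = s • pv := by
        rw [smul_smul]
        congr 1
        field_simp
      rw [hs, mul_comm]
    rw [e1]
    have e4 : (∫ s : ℝ, χ (s * P, s • pv)) = |P⁻¹| • ∫ t : ℝ, χ (t, t • (P⁻¹ • pv)) := by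
      rw [← e2]
      exact integral_congr_ae (Filter.Eventually.of_forall fun s => (e3 s).symm)
    rw [e4, abs_of_pos (by positivity), Complex.real_smul, ← mul_assoc,
      ← Complex.ofReal_mul, mul_inv_cancel₀ hP.ne']
    simp
  -- final assembly
  rw [stepB, hK_int_eq, h0, Complex.real_smul]
  push_cast
  have h2π : (2 * (π:ℂ)) ≠ 0 := by
    simp [Complex.ofReal_ne_zero, Real.pi_ne_zero]
  field_simp
  ring_nf
  simp only [mul_comm _ P]

end
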